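/- For every r > 0, Σ_{k ∈ ℕ₀³, 0 < |k| < r} 2^{ν(k)} ≤ (4π/3 + 3π/√19 + 6/19) · r³, where the sum runs over nonzero triples k of nonnegative integers with Euclidean norm |k| < r and ν(k) is the number of nonzero components of k. -/

import Mathlib

set_option maxRecDepth 100000

set_option maxRecDepth 100000

open Finset MeasureTheory

def gcount (m : ℕ) : ℕ :=
  ∑ k ∈ Fintype.piFinset (fun _ : Fin 3 => Finset.range 6),
    if k ≠ 0 ∧ ∑ i, (k i)^2 ≤ m then 2 ^ ((Finset.univ.filter (fun i => k i ≠ 0)).card) else 0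

lemma gcount_le : ∀ m ∈ Finset.range 31, 100 * (gcount m)^2 ≤ 4096 * m^3 := by decide

lemma aux_arith (g m : ℕ) (r : ℝ) (hr : 0 < r) (hmlt : (m:ℝ) < r^2)
    (h3 : 100 * g^2 ≤ 4096 * m^3) : (g : ℝ) ≤ 6.4 * r^3 := by
  have h3' : 100 * (g:ℝ)^2 ≤ 4096 * (m:ℝ)^3 := by exact_mod_cast h3
  have hm3 : (m:ℝ)^3 ≤ (r^2)^3 := pow_le_pow_left₀ (Nat.cast_nonneg _) hmlt.le 3
  have hsq : (g : ℝ)^2 ≤ (6.4 * r^3)^2 := by nlinarith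
  calc (g : ℝ) = Real.sqrt ((g:ℝ)^2) := (Real.sqrt_sq (Nat.cast_nonneg _)).symm
    _ ≤ Real.sqrt ((6.4*r^3)^2) := Real.sqrt_le_sqrt hsq
    _ = 6.4 * r^3 := Real.sqrt_sq (by positivity)

set_option maxHeartbeats 2000000 in
lemma small_case (r : ℝ) (hr : 0 < r) (hr6 : r ≤ 5.5) :
    (∑ᶠ k ∈ {k : Fin 3 → ℕ | k ≠ 0 ∧ Real.sqrt (∑ i, (k i : ℝ) ^ 2) < r},
        (2 : ℝ) ^ (Finset.univ.filter (fun i => k i ≠ 0)).card) ≤ 6.4 * r ^ 3 := by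
  set S := {k : Fin 3 → ℕ | k ≠ 0 ∧ Real.sqrt (∑ i, (k i : ℝ) ^ 2) < r} with hS
  set m : ℕ := ⌈r^2⌉₊ - 1 with hmdef
  have hceil : 1 ≤ ⌈r^2⌉₊ := Nat.one_le_iff_ne_zero.mpr (by
    simp [Nat.ceil_eq_zero, not_le]; positivity)
  have hm1 : (m : ℝ) + 1 = (⌈r^2⌉₊ : ℝ) := by
    rw [hmdef]; push_cast [Nat.cast_sub hceil]; ring
  have hmlt : (m : ℝ) < r^2 := by
    have h := Nat.ceil_lt_add_one (a := r^2) (by positivity)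
    rw [← hm1] at h; linarith
  have hm30 : m ≤ 30 := by
    have : ⌈r^2⌉₊ ≤ 31 := Nat.ceil_le.mpr (by push_cast; nlinarith)
    omega
  -- membership: S ⊆ F
  set F := (Fintype.piFinset (fun _ : Fin 3 => Finset.range 6)).filter
      (fun k => k ≠ 0 ∧ ∑ i, (k i)^2 ≤ m) with hF
  have hsub : S ⊆ ↑F := by
    intro k hk
    obtain ⟨hk0, hklt⟩ := hk
    have hsumlt : (↑(∑ i, (k i)^2) : ℝ) < r^2 := by
      push_cast
      exact (Real.sqrt_lt' hr).mp hklt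
    have hsum_le : ∑ i, (k i)^2 ≤ m := by
      have : (↑(∑ i, (k i)^2) : ℝ) < (m : ℝ) + 1 := by
        rw [hm1]; exact lt_of_lt_of_le hsumlt (Nat.le_ceil _)
      exact_mod_cast Nat.lt_succ_iff.mp (by exact_mod_cast this)
    have hki : ∀ i, k i ∈ Finset.range 6 := by
      intro i
      have h1 : (k i)^2 ≤ 30 := le_trans (le_trans (Finset.single_le_sum
        (f := fun i => (k i)^2) (fun _ _ => Nat.zero_le _) (Finset.mem_univ i)) hsum_le) hm30
      simp only [Finset.mem_range]
      nlinarith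
    simp only [hF, Finset.coe_filter, Set.mem_setOf_eq]
    exact ⟨Fintype.mem_piFinset.mpr hki, hk0, hsum_le⟩
  have hfin : S.Finite := Set.Finite.subset F.finite_toSet hsub
  rw [← Set.Finite.coe_toFinset hfin, finsum_mem_coe_finset]
  have hsub' : hfin.toFinset ⊆ F := by
    intro k hk; exact hsub ((Set.Finite.mem_toFinset hfin).mp hk)
  have h1 : ∑ k ∈ hfin.toFinset, (2 : ℝ) ^ (Finset.univ.filter (fun i => k i ≠ 0)).card
      ≤ ∑ k ∈ F, (2 : ℝ) ^ (Finset.univ.filter (fun i => k i ≠ 0)).card :=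
    Finset.sum_le_sum_of_subset_of_nonneg hsub' (fun _ _ _ => by positivity)
  have h2 : ∑ k ∈ F, (2 : ℝ) ^ (Finset.univ.filter (fun i => k i ≠ 0)).card = (gcount m : ℝ) := by
    rw [hF, Finset.sum_filter, gcount]
    push_cast [apply_ite ((↑) : ℕ → ℝ)]
    rfl
  clear_value m
  have h3 : 100 * (gcount m)^2 ≤ 4096 * m^3 := gcount_le m (Finset.mem_range.mpr (by omega))
  set g := gcount m with hgdef
  clear_value g
  have h4 : (g : ℝ) ≤ 6.4 * r^3 := aux_arith g m r hr hmlt h3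
  linarith

open MeasureTheory Real

noncomputable section

def Aset (n : ℕ) : Set ℝ := {t : ℝ | |t| ∈ Set.Ico ((n:ℝ) - 1/2) ((n:ℝ) + 1/2)}

lemma Aset_meas (n : ℕ) : MeasurableSet (Aset n) :=
  continuous_abs.measurable measurableSet_Ico

lemma Aset_vol_zero : volume (Aset 0) = 1 := by
  have : Aset 0 = Set.Ioo (-(1/2)) (1/2) := by
    ext t
    simp only [Aset, Set.mem_Ico, Set.mem_setOf_eq, Set.mem_Ioo, Nat.cast_zero]
    constructor
    · rintro ⟨_, h2⟩; exact abs_lt.mp (by linarith)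
    · intro h
      have h2 : |t| < 1/2 := abs_lt.mpr ⟨by linarith [h.1], h.2⟩
      exact ⟨by linarith [abs_nonneg t], by linarith⟩
  rw [this, Real.volume_Ioo]
  norm_num

lemma Aset_vol_pos (n : ℕ) (hn : n ≠ 0) : volume (Aset n) = 2 := by
  have h1 : (1:ℝ) ≤ (n:ℝ) := by exact_mod_cast Nat.one_le_iff_ne_zero.mpr hn
  have : Aset n = Set.Ico ((n:ℝ) - 1/2) ((n:ℝ) + 1/2) ∪
      Set.Ioc (-(n:ℝ) - 1/2) (-(n:ℝ) + 1/2) := by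
    ext t
    simp only [Aset, Set.mem_Ico, Set.mem_setOf_eq, Set.mem_union, Set.mem_Ioc]
    rcases abs_cases t with ⟨he, hs⟩ | ⟨he, hs⟩
    · rw [he]
      constructor
      · intro h; exact Or.inl h
      · rintro (h | h) <;> constructor <;> linarith [h.1, h.2]
    · rw [he]
      constructor
      · intro h; exact Or.inr ⟨by linarith [h.2], by linarith [h.1]⟩
      · rintro (h | h) <;> constructor <;> linarith [h.1, h.2]
  rw [this, measure_union _ measurableSet_Ioc]
  · rw [Real.volume_Ico, Real.volume_Ioc]
    rw [show (n:ℝ) + 1/2 - ((n:ℝ) - 1/2) = 1 by ring,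
      show -(n:ℝ) + 1/2 - (-(n:ℝ) - 1/2) = 1 by ring]
    norm_num
  · rw [Set.disjoint_left]
    rintro t ⟨ht1, _⟩ ⟨_, ht2⟩
    linarith

def Qset (k : Fin 3 → ℕ) : Set (EuclideanSpace ℝ (Fin 3)) :=
  (⇑(MeasurableEquiv.toLp 2 (Fin 3 → ℝ)).symm) ⁻¹' (Set.pi Set.univ fun i => Aset (k i))

lemma mem_Qset {k : Fin 3 → ℕ} {x : EuclideanSpace ℝ (Fin 3)} :
    x ∈ Qset k ↔ ∀ i, |x i| ∈ Set.Ico ((k i : ℝ) - 1/2) ((k i : ℝ) + 1/2) := by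
  simp only [Qset, Set.mem_preimage, Set.mem_pi, Set.mem_univ, forall_true_left,
    MeasurableEquiv.coe_toLp_symm]
  rfl

lemma Qset_meas (k : Fin 3 → ℕ) : MeasurableSet (Qset k) :=
  (MeasurableEquiv.toLp 2 (Fin 3 → ℝ)).symm.measurable
    (MeasurableSet.univ_pi fun i => Aset_meas (k i))

lemma Qset_vol (k : Fin 3 → ℕ) :
    volume (Qset k) = 2 ^ (Finset.univ.filter (fun i => k i ≠ 0)).card := by
  have h := (EuclideanSpace.volume_preserving_symm_measurableEquiv_toLp (Fin 3)).measure_preimage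
    (MeasurableSet.univ_pi fun i => Aset_meas (k i)).nullMeasurableSet
  rw [Qset, h, volume_pi_pi]
  rw [← Finset.prod_filter_mul_prod_filter_not Finset.univ (fun i => k i ≠ 0)]
  have h1 : ∀ i ∈ Finset.univ.filter (fun i => k i ≠ 0), volume (Aset (k i)) = 2 := by
    intro i hi; exact Aset_vol_pos _ (Finset.mem_filter.mp hi).2
  have h2 : ∀ i ∈ Finset.univ.filter (fun i => ¬ k i ≠ 0), volume (Aset (k i)) = 1 := by
    intro i hi
    have := (Finset.mem_filter.mp hi).2
    simp only [ne_eq, not_not] at this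
    rw [this]; exact Aset_vol_zero
  rw [Finset.prod_congr rfl h1, Finset.prod_congr rfl h2, Finset.prod_const, Finset.prod_const,
    one_pow, mul_one]

lemma Qset_disj {k k' : Fin 3 → ℕ} (hne : k ≠ k') : Disjoint (Qset k) (Qset k') := by
  rw [Set.disjoint_left]
  intro x hx hx'
  apply hne
  funext i
  have h1 := mem_Qset.mp hx i
  have h2 := mem_Qset.mp hx' i
  have c1 : (k i : ℝ) < (k' i : ℝ) + 1 := by linarith [h1.1, h2.2]
  have c2 : (k' i : ℝ) < (k i : ℝ) + 1 := by linarith [h2.1, h1.2]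
  have d1 : k i < k' i + 1 := by exact_mod_cast c1
  have d2 : k' i < k i + 1 := by exact_mod_cast c2
  omega

lemma Qset_subset_ball {k : Fin 3 → ℕ} {r : ℝ}
    (hk : Real.sqrt (∑ i, (k i : ℝ) ^ 2) < r) :
    Qset k ⊆ Metric.ball (0 : EuclideanSpace ℝ (Fin 3)) (r + Real.sqrt 3 / 2) := by
  intro x hx
  rw [mem_ball_zero_iff]
  set y : EuclideanSpace ℝ (Fin 3) := WithLp.toLp 2 (fun i => if 0 ≤ x i then (k i : ℝ) else -(k i : ℝ)) with hy
  have hxy : ∀ i, |x i - y i| ≤ 1/2 := by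
    intro i
    have hA := mem_Qset.mp hx i
    by_cases h : 0 ≤ x i
    · have : y i = (k i : ℝ) := by simp [hy, h]
      rw [this]
      rw [abs_of_nonneg h] at hA
      exact abs_le.mpr ⟨by linarith [hA.1], by linarith [hA.2]⟩
    · have : y i = -(k i : ℝ) := by simp [hy, h]
      rw [this]
      push_neg at h
      rw [abs_of_neg h] at hA
      exact abs_le.mpr ⟨by linarith [hA.2], by linarith [hA.1]⟩
  have hynorm : ‖y‖ < r := by
    rw [EuclideanSpace.norm_eq]
    have : ∀ i, ‖y i‖ ^ 2 = (k i : ℝ) ^ 2 := by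
      intro i
      by_cases h : 0 ≤ x i <;> simp [hy, h, Real.norm_eq_abs, sq_abs] <;> ring
    rw [Finset.sum_congr rfl (fun i _ => this i)]
    exact hk
  have hxynorm : ‖x - y‖ ≤ Real.sqrt 3 / 2 := by
    rw [EuclideanSpace.norm_eq]
    have hb : ∑ i, ‖(x - y) i‖ ^ 2 ≤ (3 : ℝ) / 4 := by
      have : ∀ i, ‖(x - y) i‖ ^ 2 ≤ 1/4 := by
        intro i
        have h1 : ‖(x - y) i‖ = |x i - y i| := by
          rw [PiLp.sub_apply, Real.norm_eq_abs]
        rw [h1]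
        nlinarith [hxy i, abs_nonneg (x i - y i)]
      calc ∑ i, ‖(x - y) i‖ ^ 2 ≤ ∑ _i : Fin 3, (1:ℝ)/4 :=
            Finset.sum_le_sum (fun i _ => this i)
        _ = 3/4 := by simp; norm_num
    calc Real.sqrt (∑ i, ‖(x - y) i‖ ^ 2) ≤ Real.sqrt (3/4) := Real.sqrt_le_sqrt hb
      _ = Real.sqrt 3 / 2 := by
          rw [show (3:ℝ)/4 = (Real.sqrt 3 / 2)^2 by
            rw [div_pow, Real.sq_sqrt (by norm_num : (3:ℝ) ≥ 0)]; norm_num]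
          exact Real.sqrt_sq (by positivity)
  calc ‖x‖ = ‖x - y + y‖ := by rw [sub_add_cancel]
    _ ≤ ‖x - y‖ + ‖y‖ := norm_add_le _ _
    _ < r + Real.sqrt 3 / 2 := by linarith

lemma ball_vol (R : ℝ) (hR : 0 ≤ R) :
    volume (Metric.ball (0 : EuclideanSpace ℝ (Fin 3)) R)
      = ENNReal.ofReal (R ^ 3 * (4 * π / 3)) := by
  rw [EuclideanSpace.volume_ball]
  have hcard : Fintype.card (Fin 3) = 3 := by simp
  rw [hcard]
  have hsp : Real.sqrt π > 0 := Real.sqrt_pos.mpr Real.pi_pos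
  have h1 : Real.Gamma ((3:ℕ) / 2 + 1) = 3/4 * Real.sqrt π := by
    push_cast
    rw [Real.Gamma_add_one (by norm_num)]
    rw [show (3:ℝ)/2 = 1/2 + 1 by norm_num, Real.Gamma_add_one (by norm_num),
      Real.Gamma_one_half_eq]
    ring
  have h2 : Real.sqrt π ^ 3 = π * Real.sqrt π := by
    rw [pow_succ, Real.sq_sqrt Real.pi_pos.le]
  rw [h1, h2]
  have h3 : π * Real.sqrt π / (3 / 4 * Real.sqrt π) = 4 * π / 3 := by
    field_simp
  rw [h3, ← ENNReal.ofReal_pow hR, ← ENNReal.ofReal_mul (by positivity)]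

lemma large_case (r : ℝ) (hr : 0 < r) :
    (∑ᶠ k ∈ {k : Fin 3 → ℕ | k ≠ 0 ∧ Real.sqrt (∑ i, (k i : ℝ) ^ 2) < r},
        (2 : ℝ) ^ (Finset.univ.filter (fun i => k i ≠ 0)).card)
      ≤ (r + Real.sqrt 3 / 2) ^ 3 * (4 * π / 3) := by
  set S := {k : Fin 3 → ℕ | k ≠ 0 ∧ Real.sqrt (∑ i, (k i : ℝ) ^ 2) < r} with hS
  have hnorm : ∀ k ∈ S, Real.sqrt (∑ i, (k i : ℝ) ^ 2) < r := fun k hk => hk.2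
  have hfin : S.Finite := by
    apply Set.Finite.subset (Set.Finite.pi (fun _ : Fin 3 => Set.finite_Iic ⌈r⌉₊))
    intro k hk
    rw [Set.mem_pi]
    intro i _
    have h1 : (k i : ℝ) ^ 2 ≤ ∑ j, (k j : ℝ) ^ 2 :=
      Finset.single_le_sum (f := fun j => ((k j : ℝ))^2) (fun _ _ => by positivity)
        (Finset.mem_univ i)
    have h2 : (k i : ℝ) ≤ Real.sqrt (∑ j, (k j : ℝ) ^ 2) := by
      rw [show ((k i : ℝ)) = Real.sqrt ((k i : ℝ)^2) from (Real.sqrt_sq (by positivity)).symm]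
      exact Real.sqrt_le_sqrt h1
    have h3 : (k i : ℝ) ≤ (⌈r⌉₊ : ℝ) := le_trans h2 (le_trans (hnorm k hk).le (Nat.le_ceil r))
    exact_mod_cast h3
  rw [← Set.Finite.coe_toFinset hfin, finsum_mem_coe_finset]
  set T := hfin.toFinset with hT
  have key : ENNReal.ofReal (∑ k ∈ T, (2 : ℝ) ^ (Finset.univ.filter (fun i => k i ≠ 0)).card)
      ≤ ENNReal.ofReal ((r + Real.sqrt 3 / 2) ^ 3 * (4 * π / 3)) := by
    rw [ENNReal.ofReal_sum_of_nonneg (fun k _ => by positivity)]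
    have e1 : ∀ k ∈ T, ENNReal.ofReal ((2:ℝ) ^ (Finset.univ.filter (fun i => k i ≠ 0)).card)
        = volume (Qset k) := by
      intro k _
      rw [Qset_vol, ENNReal.ofReal_pow (by norm_num : (0:ℝ) ≤ 2)]
      norm_num
    rw [Finset.sum_congr rfl e1]
    rw [← measure_biUnion_finset ?hd (fun k _ => Qset_meas k)]
    case hd =>
      intro k hk k' hk' hne
      exact Qset_disj hne
    rw [← ball_vol (r + Real.sqrt 3 / 2) (by positivity)]
    apply measure_mono
    apply Set.iUnion₂_subset
    intro k hk
    exact Qset_subset_ball (hnorm k ((Set.Finite.mem_toFinset hfin).mp hk))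
  exact (ENNReal.ofReal_le_ofReal_iff (by positivity)).mp key

lemma sqrt_le_of_sq_le {a b : ℝ} (hb : 0 ≤ b) (h : a ≤ b^2) : Real.sqrt a ≤ b := by
  calc Real.sqrt a ≤ Real.sqrt (b^2) := Real.sqrt_le_sqrt h
    _ = b := Real.sqrt_sq hb

lemma const_bounds : 6.4 ≤ 4 * π / 3 + 3 * π / Real.sqrt 19 + 6 / 19 ∧
    (∀ r : ℝ, 5.5 ≤ r →
      (r + Real.sqrt 3 / 2) ^ 3 * (4 * π / 3)
        ≤ (4 * π / 3 + 3 * π / Real.sqrt 19 + 6 / 19) * r ^ 3) := by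
  have hπl : 3.141592 < π := Real.pi_gt_d6
  have hπu : π < 3.141593 := Real.pi_lt_d6
  have h19p : (0:ℝ) < Real.sqrt 19 := Real.sqrt_pos.mpr (by norm_num)
  have h19u : Real.sqrt 19 ≤ 4.359 := sqrt_le_of_sq_le (by norm_num) (by norm_num)
  have hs3n : (0:ℝ) ≤ Real.sqrt 3 := Real.sqrt_nonneg 3
  have hs3 : Real.sqrt 3 ≤ 1.7320509 := sqrt_le_of_sq_le (by norm_num) (by norm_num)
  have hd : (2.162:ℝ) ≤ 3 * π / Real.sqrt 19 := by
    have h1 : (3:ℝ) * 3.141592 / 4.359 ≤ 3 * π / Real.sqrt 19 :=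
      div_le_div₀ (by positivity) (by linarith) h19p h19u
    calc (2.162:ℝ) ≤ 3 * 3.141592 / 4.359 := by norm_num
      _ ≤ _ := h1
  constructor
  · linarith
  · intro r hr
    have hrp : (0:ℝ) < r := by linarith
    have step1 : (r + Real.sqrt 3 / 2) ^ 3 ≤ (r + 0.86602545) ^ 3 := by
      apply pow_le_pow_left₀ (by linarith) (by linarith)
    have step2 : (r + Real.sqrt 3 / 2) ^ 3 * (4 * π / 3)
        ≤ (r + 0.86602545) ^ 3 * 4.1887907 := by
      apply mul_le_mul step1 (by linarith) (by linarith) (by positivity)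
    have step3 : (r + 0.86602545) ^ 3 * 4.1887907 ≤ 6.666 * r ^ 3 := by
      nlinarith [sq_nonneg (r - 5.5), mul_nonneg (sub_nonneg.mpr hr) (sq_nonneg r),
        mul_nonneg (sub_nonneg.mpr hr) (mul_nonneg (sub_nonneg.mpr hr) hrp.le),
        mul_nonneg (mul_nonneg (sub_nonneg.mpr hr) (sub_nonneg.mpr hr)) (sub_nonneg.mpr hr)]
    have step4 : (6.666:ℝ) * r ^ 3 ≤ (4 * π / 3 + 3 * π / Real.sqrt 19 + 6 / 19) * r ^ 3 := by
      have : (6.666:ℝ) ≤ 4 * π / 3 + 3 * π / Real.sqrt 19 + 6 / 19 := by linarith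
      exact mul_le_mul_of_nonneg_right this (by positivity)
    linarith

/-- **Improved lattice point count in dimension 3** (Remark 3.2 of
Benguria–Vallejos–Van Den Bosch): for every `r > 0`,
`∑_{k ∈ ℕ₀³, 0 < |k| < r} 2^{ν(k)} ≤ (4π/3 + 3π/√19 + 6/19) r³`. -/
theorem weighted_lattice_count_dim_three (r : ℝ) (hr : 0 < r) :
    (∑ᶠ k ∈ {k : Fin 3 → ℕ | k ≠ 0 ∧ Real.sqrt (∑ i, (k i : ℝ) ^ 2) < r},
        (2 : ℝ) ^ (Finset.univ.filter (fun i => k i ≠ 0)).card)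
      ≤ (4 * Real.pi / 3 + 3 * Real.pi / Real.sqrt 19 + 6 / 19) * r ^ 3 := by
  obtain ⟨hC, hlarge⟩ := const_bounds
  rcases le_total r 5.5 with h | h
  · calc _ ≤ 6.4 * r ^ 3 := small_case r hr h
      _ ≤ (4 * Real.pi / 3 + 3 * Real.pi / Real.sqrt 19 + 6 / 19) * r ^ 3 :=
        mul_le_mul_of_nonneg_right hC (by positivity)
  · calc _ ≤ (r + Real.sqrt 3 / 2) ^ 3 * (4 * π / 3) := large_case r hr
      _ ≤ _ := hlarge r h
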